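/- For every real m > 0, the limit C₁(m) := lim_{ρ→∞} ρ·exp(−∫_{ρ₊(m)}^{ρ} V_m(σ)^{−1/2} dσ) exists and is a finite strictly positive real number. -/

import Mathlib

noncomputable def Vhp (m ρ : ℝ) : ℝ := ρ ^ 2 + 1 - 2 * m / ρ

open MeasureTheory Set Filter

lemma Vhp_factor (m ρp : ℝ) (h0 : 0 < ρp) (hroot : ρp ^ 3 + ρp - 2 * m = 0)
    {σ : ℝ} (hσ : 0 < σ) :
    Vhp m σ = (σ - ρp) * (σ ^ 2 + σ * ρp + ρp ^ 2 + 1) / σ := by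
  have h2m : 2 * m = ρp ^ 3 + ρp := by linarith
  unfold Vhp
  rw [h2m]
  field_simp
  ring

lemma Vhp_meas (m : ℝ) : Measurable (Vhp m) := by
  unfold Vhp
  exact ((measurable_id.pow_const 2).add_const 1).sub (measurable_const.div measurable_id)

lemma sqrtV_meas (m : ℝ) : Measurable fun σ : ℝ => 1 / Real.sqrt (Vhp m σ) := by
  simp only [one_div]
  exact (Real.continuous_sqrt.measurable.comp (Vhp_meas m)).inv

lemma f_intervalIntegrable (m ρp : ℝ) (h0 : 0 < ρp) (hroot : ρp ^ 3 + ρp - 2 * m = 0)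
    {b : ℝ} (hb : ρp ≤ b) :
    IntervalIntegrable (fun σ => 1 / Real.sqrt (Vhp m σ)) volume ρp b := by
  set c : ℝ := (ρp ^ 2 + 1) / b with hc
  have hbpos : 0 < b := lt_of_lt_of_le h0 hb
  have hcpos : 0 < c := div_pos (by positivity) hbpos
  have hcomp : IntervalIntegrable
      (fun σ : ℝ => (1 / Real.sqrt c) * (σ - ρp) ^ (-(1/2) : ℝ)) volume ρp b := by
    have h1 : IntervalIntegrable (fun x : ℝ => x ^ (-(1/2) : ℝ)) volume 0 (b - ρp) :=
      intervalIntegral.intervalIntegrable_rpow' (by norm_num)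
    have h2 := h1.comp_sub_right ρp
    simp only [zero_add, sub_add_cancel] at h2
    exact h2.const_mul _
  rw [intervalIntegrable_iff_integrableOn_Ioc_of_le hb] at hcomp ⊢
  refine hcomp.mono' ((sqrtV_meas m).aestronglyMeasurable.restrict) ?_
  rw [ae_restrict_iff' measurableSet_Ioc]
  filter_upwards with σ hσmem
  obtain ⟨hσ1, hσ2⟩ := hσmem
  have hσ0 : 0 < σ := lt_trans h0 hσ1
  have hsp : 0 < σ - ρp := by linarith
  have hV : Vhp m σ = (σ - ρp) * (σ ^ 2 + σ * ρp + ρp ^ 2 + 1) / σ :=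
    Vhp_factor m ρp h0 hroot hσ0
  have hge : c * (σ - ρp) ≤ Vhp m σ := by
    rw [hV, hc, div_mul_eq_mul_div, div_le_div_iff₀ hbpos hσ0]
    have e1 : (ρp ^ 2 + 1) * (σ - ρp) * σ ≤ (ρp ^ 2 + 1) * (σ - ρp) * b :=
      mul_le_mul_of_nonneg_left hσ2 (mul_nonneg (by positivity) hsp.le)
    have h2' : ρp ^ 2 + 1 ≤ σ ^ 2 + σ * ρp + ρp ^ 2 + 1 := by nlinarith
    have e2 : (ρp ^ 2 + 1) * (σ - ρp) * b ≤ (σ ^ 2 + σ * ρp + ρp ^ 2 + 1) * (σ - ρp) * b :=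
      mul_le_mul_of_nonneg_right (mul_le_mul_of_nonneg_right h2' hsp.le) hbpos.le
    nlinarith [e1, e2]
  have h1 : Real.sqrt (c * (σ - ρp)) ≤ Real.sqrt (Vhp m σ) := Real.sqrt_le_sqrt hge
  have h2 : 0 < Real.sqrt (c * (σ - ρp)) := Real.sqrt_pos.mpr (mul_pos hcpos hsp)
  have h3 : 1 / Real.sqrt (Vhp m σ) ≤ 1 / Real.sqrt (c * (σ - ρp)) :=
    one_div_le_one_div_of_le h2 h1
  have h4 : Real.sqrt (c * (σ - ρp)) = Real.sqrt c * Real.sqrt (σ - ρp) :=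
    Real.sqrt_mul hcpos.le _
  have h5 : (σ - ρp) ^ (-(1/2) : ℝ) = (Real.sqrt (σ - ρp))⁻¹ := by
    rw [Real.rpow_neg hsp.le, Real.sqrt_eq_rpow]
  calc ‖1 / Real.sqrt (Vhp m σ)‖ = 1 / Real.sqrt (Vhp m σ) := by
        rw [Real.norm_eq_abs, abs_of_nonneg (by positivity)]
    _ ≤ 1 / Real.sqrt (c * (σ - ρp)) := h3
    _ = (1 / Real.sqrt c) * (σ - ρp) ^ (-(1/2) : ℝ) := by
        rw [h4, h5, one_div, mul_inv, one_div]

lemma g_integrableOn (m ρp : ℝ) (hm : 0 < m) (h0 : 0 < ρp)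
    (hroot : ρp ^ 3 + ρp - 2 * m = 0) :
    IntegrableOn (fun σ : ℝ => 1 / σ - 1 / Real.sqrt (Vhp m σ)) (Ioi ρp) := by
  set a : ℝ := max (ρp + 1) (max 1 (2 * m)) with ha
  have haρ : ρp < a := lt_of_lt_of_le (by linarith) (le_max_left _ _)
  have ha1 : (1:ℝ) ≤ a := le_trans (le_max_left _ _) (le_max_right _ _)
  have ham : 2 * m ≤ a := le_trans (le_max_right _ _) (le_max_right _ _)
  have ha0 : (0:ℝ) < a := by linarith
  have hmeas : Measurable fun σ : ℝ => 1 / σ - 1 / Real.sqrt (Vhp m σ) :=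
    (measurable_const.div measurable_id).sub (sqrtV_meas m)
  have h1 : IntegrableOn (fun σ : ℝ => 1 / σ - 1 / Real.sqrt (Vhp m σ)) (Ioc ρp a) := by
    apply Integrable.sub
    · apply (ContinuousOn.integrableOn_Icc ?_).mono_set Ioc_subset_Icc_self
      apply ContinuousOn.div continuousOn_const continuousOn_id
      intro x hx
      exact ne_of_gt (lt_of_lt_of_le h0 hx.1)
    · exact (intervalIntegrable_iff_integrableOn_Ioc_of_le haρ.le).mp
        (f_intervalIntegrable m ρp h0 hroot haρ.le)
  have h2 : IntegrableOn (fun σ : ℝ => 1 / σ - 1 / Real.sqrt (Vhp m σ)) (Ioi a) := by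
    have hint : IntegrableOn (fun x : ℝ => x ^ (-2 : ℝ)) (Ioi a) :=
      integrableOn_Ioi_rpow_of_lt (by norm_num) ha0
    refine hint.mono' (hmeas.aestronglyMeasurable.restrict) ?_
    rw [ae_restrict_iff' measurableSet_Ioi]
    filter_upwards with σ hσ
    have hσa : a < σ := hσ
    have hσ0 : 0 < σ := lt_trans ha0 hσa
    have hσ1 : 1 ≤ σ := le_of_lt (lt_of_le_of_lt ha1 hσa)
    set s := Real.sqrt (Vhp m σ) with hs
    have hdiv1 : 2 * m / σ ≤ 1 := by
      rw [div_le_one hσ0]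
      linarith
    have hdiv0 : 0 ≤ 2 * m / σ := by positivity
    have hVlb : σ ^ 2 ≤ Vhp m σ := by
      unfold Vhp; linarith
    have hV0 : 0 ≤ Vhp m σ := le_trans (by positivity) hVlb
    have hs_lb : σ ≤ s := (Real.le_sqrt hσ0.le hV0).mpr hVlb
    have hs0 : 0 < s := lt_of_lt_of_le hσ0 hs_lb
    have hq : Vhp m σ ≤ (σ + 1 / (2 * σ)) ^ 2 := by
      have h2t : σ * (1 / (2 * σ)) = 1 / 2 := by field_simp
      have hVub : Vhp m σ ≤ σ ^ 2 + 1 := by unfold Vhp; linarith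
      nlinarith [sq_nonneg (1 / (2 * σ))]
    have hs_ub : s ≤ σ + 1 / (2 * σ) := by
      have h := Real.sqrt_le_sqrt hq
      rwa [Real.sqrt_sq (by positivity : (0:ℝ) ≤ σ + 1 / (2 * σ))] at h
    have hr : σ ^ (-2 : ℝ) = (σ ^ 2)⁻¹ := by
      rw [show (-2 : ℝ) = -(2:ℕ) by push_cast; ring, Real.rpow_neg hσ0.le, Real.rpow_natCast]
    have hvle : 1 / s ≤ 1 / σ := one_div_le_one_div_of_le hσ0 hs_lb
    have key : 1 / σ - 1 / s = (s - σ) / (σ * s) := by field_simp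
    have k2 : (s - σ) / (σ * s) ≤ (1 / (2 * σ)) / (σ * σ) := by
      apply div_le_div₀ (by positivity) (by linarith) (by positivity)
      exact mul_le_mul_of_nonneg_left hs_lb hσ0.le
    have k3 : (1 / (2 * σ)) / (σ * σ) ≤ (σ ^ 2)⁻¹ := by
      rw [div_le_iff₀ (by positivity), show (σ^2)⁻¹ * (σ * σ) = 1 by field_simp,
        div_le_one (by positivity)]
      linarith
    rw [hr, Real.norm_eq_abs, abs_of_nonneg (by linarith)]
    calc 1 / σ - 1 / s = (s - σ) / (σ * s) := key
      _ ≤ (1 / (2 * σ)) / (σ * σ) := k2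
      _ ≤ (σ ^ 2)⁻¹ := k3
  exact (h1.union h2).mono_set (Ioc_union_Ioi_eq_Ioi haρ.le).symm.subset

/-- For every `m > 0`, the limit
`C₁(m) = lim_{ρ→∞} ρ·exp(−∫_{ρ₊(m)}^{ρ} V_m(σ)^{−1/2} dσ)` exists and is a finite
strictly positive real number. -/
theorem C1_limit_exists (m : ℝ) (hm : 0 < m) (ρp : ℝ)
    (hρp : 0 < ρp ∧ ρp ^ 3 + ρp - 2 * m = 0) :
    ∃ C : ℝ, 0 < C ∧
      Filter.Tendsto
        (fun ρ : ℝ => ρ * Real.exp (-∫ σ in ρp..ρ, 1 / Real.sqrt (Vhp m σ)))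
        Filter.atTop (nhds C) := by
  obtain ⟨h0, hroot⟩ := hρp
  have hgint : IntegrableOn (fun σ : ℝ => 1 / σ - 1 / Real.sqrt (Vhp m σ)) (Ioi ρp) :=
    g_integrableOn m ρp hm h0 hroot
  set L : ℝ := ∫ σ in Ioi ρp, (1 / σ - 1 / Real.sqrt (Vhp m σ)) with hL
  refine ⟨ρp * Real.exp L, by positivity, ?_⟩
  have htend : Tendsto
      (fun ρ : ℝ => ρp * Real.exp (∫ σ in ρp..ρ, (1 / σ - 1 / Real.sqrt (Vhp m σ))))
      atTop (nhds (ρp * Real.exp L)) :=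
    Tendsto.const_mul _ ((Real.continuous_exp.tendsto L).comp
      (MeasureTheory.intervalIntegral_tendsto_integral_Ioi ρp hgint tendsto_id))
  refine Tendsto.congr' ?_ htend
  filter_upwards [eventually_ge_atTop ρp] with ρ hρ
  have hρ0 : 0 < ρ := lt_of_lt_of_le h0 hρ
  have hf_int : IntervalIntegrable (fun σ => 1 / Real.sqrt (Vhp m σ)) volume ρp ρ :=
    f_intervalIntegrable m ρp h0 hroot hρ
  have h1div : IntervalIntegrable (fun σ : ℝ => 1 / σ) volume ρp ρ := by
    apply ContinuousOn.intervalIntegrable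
    apply ContinuousOn.div continuousOn_const continuousOn_id
    intro x hx
    rw [uIcc_of_le hρ] at hx
    exact ne_of_gt (lt_of_lt_of_le h0 hx.1)
  have hsplit : (∫ σ in ρp..ρ, (1 / σ - 1 / Real.sqrt (Vhp m σ)))
      = (∫ σ in ρp..ρ, 1 / σ) - ∫ σ in ρp..ρ, 1 / Real.sqrt (Vhp m σ) :=
    intervalIntegral.integral_sub h1div hf_int
  have hlog : (∫ σ in ρp..ρ, 1 / σ) = Real.log (ρ / ρp) := by
    apply integral_one_div
    rw [uIcc_of_le hρ]
    intro hmem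
    exact absurd hmem.1 (not_le.mpr h0)
  rw [hsplit, hlog, sub_eq_add_neg, Real.exp_add, Real.exp_log (div_pos hρ0 h0)]
  field_simp
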